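/- In the group D, the powers of y are pairwise nonconjugate: if 0 ≤ i, j < p^n and y^i is conjugate in D to y^j, then i = j. Consequently the elements of ⟨y⟩ lie in exactly p^n distinct conjugacy classes of D. -/

import Mathlib

/-- In the split metacyclic group
`D = ⟨x, y ∣ x^(p^m) = y^(p^n) = 1, y x y⁻¹ = x^(1+p^l)⟩` (`p` odd, `0 < l < m`,
`m − l ≤ n`), the powers of `y` are pairwise nonconjugate; consequently the
elements of `⟨y⟩` lie in exactly `p^n` distinct conjugacy classes. -/
theorem stmt_5 (p m n l : ℕ) (hp : p.Prime) (hodd : Odd p)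
    (hl : 0 < l) (hlm : l < m) (hmn : m - l ≤ n)
    (D : Type*) [Group D] (x y : D)
    (hcard : Nat.card D = p ^ (m + n))
    (hx : orderOf x = p ^ m) (hy : orderOf y = p ^ n)
    (hconj : y * x * y⁻¹ = x ^ (1 + p ^ l))
    (hgen : Subgroup.closure {x, y} = ⊤) :
    (∀ i j : ℕ, i < p ^ n → j < p ^ n → IsConj (y ^ i) (y ^ j) → i = j) ∧
    Set.ncard (ConjClasses.mk '' ((Subgroup.zpowers y : Subgroup D) : Set D)) = p ^ n := by
  have hp1 : 1 < p := hp.one_lt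
  have hD : Finite D := Nat.finite_of_card_ne_zero (by rw [hcard]; positivity)
  set N := Subgroup.zpowers x with hN
  set s := 1 + p ^ l with hs
  -- coprimality of s with p^m and a multiplicative inverse t
  have hps : ¬ p ∣ s := by
    intro h
    have h2 : p ∣ p ^ l := dvd_pow_self p hl.ne'
    have h3 : p ∣ 1 := by
      have := Nat.dvd_sub h h2
      simpa [hs] using this
    exact hp.ne_one (Nat.dvd_one.mp h3)
  have hcop : Nat.Coprime s (p ^ m) :=
    ((Nat.Prime.coprime_iff_not_dvd hp).mpr hps).symm.pow_right m
  have hm0 : m ≠ 0 := by omega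
  obtain ⟨t, ht⟩ : ∃ t, s * t % p ^ m = 1 :=
    by obtain ⟨t, -, ht⟩ := Nat.exists_mul_mod_eq_one_of_coprime hcop (Nat.one_lt_pow hm0 hp1); exact ⟨t, ht⟩
  -- conjugation facts
  have hyxy : ∀ k : ℤ, y * x ^ k * y⁻¹ = x ^ ((s : ℤ) * k) := by
    intro k
    rw [← conj_zpow, hconj, ← zpow_natCast, ← zpow_mul]
  have hxst : x ^ (s * t) = x := by
    conv_lhs => rw [← pow_mod_orderOf]
    rw [hx, ht, pow_one]
  have hxstz : x ^ ((s : ℤ) * t) = x := by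
    rw [show ((s : ℤ) * t) = ((s * t : ℕ) : ℤ) by push_cast; ring, zpow_natCast, hxst]
  have hxinv : ∀ k : ℤ, y⁻¹ * x ^ k * y = x ^ ((t : ℤ) * k) := by
    intro k
    have h1 : y * x ^ ((t : ℤ) * k) * y⁻¹ = x ^ k := by
      rw [hyxy, show (s : ℤ) * ((t : ℤ) * k) = ((s : ℤ) * t) * k by ring, zpow_mul, hxstz]
    rw [← h1]; group
  -- N is normal
  have hNnormal : N.Normal := by
    apply Subgroup.normalizer_eq_top_iff.mp
    rw [eq_top_iff, ← hgen]
    apply Subgroup.closure_le _ |>.mpr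
    intro g hg
    rw [SetLike.mem_coe]
    rcases hg with h | h
    · rw [h]
      exact Subgroup.le_normalizer (Subgroup.mem_zpowers x)
    · rw [Set.mem_singleton_iff] at h
      rw [h, Subgroup.mem_normalizer_iff]
      intro h
      constructor
      · rintro ⟨k, rfl⟩
        refine ⟨(s : ℤ) * k, ?_⟩
        simp only
        exact (hyxy k).symm
      · rintro ⟨k, hk⟩
        refine ⟨(t : ℤ) * k, ?_⟩
        simp only at hk ⊢
        have h5 := hxinv k
        rw [hk] at h5
        rw [← h5]; group
  -- the quotient
  set Q := D ⧸ N with hQ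
  set f := QuotientGroup.mk' N with hf
  have hfx : f x = 1 := (QuotientGroup.eq_one_iff x).mpr (Subgroup.mem_zpowers x)
  have hgenQ : Subgroup.zpowers (f y) = ⊤ := by
    have h1 : Subgroup.map f ⊤ = ⊤ :=
      Subgroup.map_top_of_surjective f (QuotientGroup.mk'_surjective N)
    rw [← hgen, MonoidHom.map_closure] at h1
    have h2 : f '' {x, y} = {1, f y} := by
      rw [Set.image_insert_eq, Set.image_singleton, hfx]
    rw [h2] at h1
    have h3 : Subgroup.closure ({1, f y} : Set Q) = Subgroup.closure {f y} := by
      apply le_antisymm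
      · apply Subgroup.closure_le _ |>.mpr
        rintro g (rfl | rfl)
        · exact Subgroup.one_mem _
        · exact Subgroup.subset_closure rfl
      · exact Subgroup.closure_mono (by simp)
    rw [h3, ← Subgroup.zpowers_eq_closure] at h1
    exact h1
  have hcardN : Nat.card N = p ^ m := by rw [hN, Nat.card_zpowers, hx]
  have hcardQ : Nat.card Q = p ^ n := by
    have h1 := Subgroup.card_eq_card_quotient_mul_card_subgroup N
    rw [hcard, hcardN, pow_add] at h1
    have hpm : 0 < p ^ m := pow_pos hp.pos m
    exact Nat.eq_of_mul_eq_mul_right hpm (by rw [← h1]; ring)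
  have hQfin : Finite Q := Quotient.finite _
  have hordfy : orderOf (f y) = p ^ n := by
    rw [← Nat.card_zpowers, hgenQ, ← hcardQ]
    exact Nat.card_congr Subgroup.topEquiv.toEquiv
  -- Part 1: powers of y are pairwise nonconjugate
  have part1 : ∀ i j : ℕ, i < p ^ n → j < p ^ n → IsConj (y ^ i) (y ^ j) → i = j := by
    intro i j hi hj hc
    obtain ⟨g, hg⟩ := hc
    have hg' : f g * (f y) ^ i = (f y) ^ j * f g := by
      have := congrArg f (hg : g * y ^ i = y ^ j * g)
      simpa [map_mul, map_pow] using this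
    obtain ⟨k, hk⟩ : ∃ k : ℤ, (f y) ^ k = f g := by
      have : f g ∈ Subgroup.zpowers (f y) := by rw [hgenQ]; trivial
      exact this
    rw [← hk] at hg'
    have hyy : (f y) ^ i = (f y) ^ j := by
      have hcomm : Commute ((f y) ^ k) ((f y) ^ i) :=
        ((Commute.refl (f y)).zpow_left k).pow_right i
      rw [hcomm.eq] at hg'
      exact mul_right_cancel hg'
    have := pow_injOn_Iio_orderOf (x := f y) (by rwa [hordfy] : i ∈ Set.Iio (orderOf (f y)))
      (by rwa [hordfy] : j ∈ Set.Iio (orderOf (f y))) hyy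
    exact this
  refine ⟨part1, ?_⟩
  -- Part 2: counting conjugacy classes
  have hset : ConjClasses.mk '' ((Subgroup.zpowers y : Subgroup D) : Set D)
      = (fun i : ℕ => ConjClasses.mk (y ^ i)) '' Set.Iio (p ^ n) := by
    ext c
    constructor
    · rintro ⟨g, hg, rfl⟩
      obtain ⟨k, hk⟩ := hg
      simp only at hk
      have hpn0 : (0 : ℤ) < (p : ℤ) ^ n := by positivity
      refine ⟨(k % ((p : ℤ) ^ n)).toNat, ?_, ?_⟩
      · have h1 := Int.emod_lt_of_pos k hpn0
        have h2 := Int.emod_nonneg k hpn0.ne'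
        have h3 : ((p ^ n : ℕ) : ℤ) = (p : ℤ) ^ n := by push_cast; ring
        simp only [Set.mem_Iio]
        omega
      · simp only
        congr 1
        rw [← hk, ← zpow_natCast, Int.toNat_of_nonneg (Int.emod_nonneg k hpn0.ne')]
        rw [show ((p : ℤ) ^ n) = ((orderOf y : ℕ) : ℤ) by rw [hy]; push_cast; ring]
        exact zpow_mod_orderOf y k
    · rintro ⟨i, _, rfl⟩
      exact ⟨y ^ i, ⟨(i : ℤ), by simp⟩, rfl⟩
  rw [hset, Set.ncard_image_of_injOn]
  · rw [show Set.Iio (p ^ n) = ↑(Finset.Iio (p ^ n)) from (Finset.coe_Iio _).symm,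
      Set.ncard_coe_finset, Nat.card_Iio]
  · intro i hi j hj hij
    exact part1 i j hi hj (ConjClasses.mk_eq_mk_iff_isConj.mp hij)
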